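/- (Generation of 𝒮₁.) Let Γ have at least two elements and let S be a nonempty list over Γ. Then the Levenshtein ball of radius 1 around S equals the set of single-replacement edits of the expansion: {S' : List Γ | d_lev(S, S') ≤ 1} = {ψ((φ(S)).set i c) | i < 2·|S| + 1, c : Option Γ}. -/

import Mathlib

/-- The expansion map: insert the special symbol `ξ` (encoded as `none`)
before and after every character of `S`. -/
def phi {Γ : Type*} (S : List Γ) : List (Option Γ) :=
  none :: S.flatMap (fun c => [some c, none])

/-- The contraction map: remove all occurrences of `ξ` (encoded as `none`). -/
def psi {Γ : Type*} (T : List (Option Γ)) : List Γ :=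
  T.filterMap id

/-- Costs of the edit operations (as in the former `Mathlib.Data.List.EditDistance.Defs`). -/
structure Levenshtein.Cost (α β δ : Type*) where
  delete : α → δ
  insert : β → δ
  substitute : α → β → δ

/-- The default unit cost (as in the former Mathlib). -/
def Levenshtein.defaultCost {α : Type*} [DecidableEq α] : Levenshtein.Cost α α ℕ where
  delete _ := 1
  insert _ := 1
  substitute a b := if a = b then 0 else 1

/-- The Levenshtein distance, by the recurrence the former Mathlib definition satisfies. -/
def levenshtein {α β δ : Type*} [AddZeroClass δ] [Min δ] (C : Levenshtein.Cost α β δ) :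
    List α → List β → δ
  | [], [] => 0
  | [], y :: ys => C.insert y + levenshtein C [] ys
  | x :: xs, [] => C.delete x + levenshtein C xs []
  | x :: xs, y :: ys =>
    min (C.delete x + levenshtein C xs (y :: ys))
      (min (C.insert y + levenshtein C (x :: xs) ys) (C.substitute x y + levenshtein C xs ys))

/-- The Levenshtein (edit) distance with unit costs. -/
def dlev {Γ : Type*} [DecidableEq Γ] (S S' : List Γ) : ℕ :=
  levenshtein Levenshtein.defaultCost S S'

@[simp] lemma levenshtein_nil_nil {α β δ : Type*} [AddZeroClass δ] [Min δ]
    (C : Levenshtein.Cost α β δ) : levenshtein C [] [] = 0 := by rw [levenshtein]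

@[simp] lemma levenshtein_nil_cons {α β δ : Type*} [AddZeroClass δ] [Min δ]
    (C : Levenshtein.Cost α β δ) (y : β) (ys : List β) :
    levenshtein C [] (y :: ys) = C.insert y + levenshtein C [] ys := by rw [levenshtein]

@[simp] lemma levenshtein_cons_nil {α β δ : Type*} [AddZeroClass δ] [Min δ]
    (C : Levenshtein.Cost α β δ) (x : α) (xs : List α) :
    levenshtein C (x :: xs) [] = C.delete x + levenshtein C xs [] := by rw [levenshtein]

lemma levenshtein_cons_cons {α β δ : Type*} [AddZeroClass δ] [Min δ]
    (C : Levenshtein.Cost α β δ) (x : α) (xs : List α) (y : β) (ys : List β) :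
    levenshtein C (x :: xs) (y :: ys) =
      min (C.delete x + levenshtein C xs (y :: ys))
        (min (C.insert y + levenshtein C (x :: xs) ys) (C.substitute x y + levenshtein C xs ys)) := by
  rw [levenshtein]

section Aux
variable {Γ : Type*} [DecidableEq Γ]

local notation "C" => (Levenshtein.defaultCost : Levenshtein.Cost Γ Γ ℕ)

lemma dc_delete (a : Γ) : (C).delete a = 1 := rfl
lemma dc_insert (a : Γ) : (C).insert a = 1 := rfl
lemma dc_substitute (a b : Γ) : (C).substitute a b = if a = b then 0 else 1 := rfl

lemma lev_self (u : List Γ) : levenshtein C u u = 0 := by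
  induction u with
  | nil => simp
  | cons a u ih =>
    refine le_antisymm ?_ (Nat.zero_le _)
    rw [levenshtein_cons_cons]
    refine le_trans (le_trans (min_le_right _ _) (min_le_right _ _)) ?_
    simp [dc_substitute, ih]

lemma lev_eq_zero : ∀ {u v : List Γ}, levenshtein C u v = 0 → u = v := by
  intro u
  induction u with
  | nil =>
    intro v h
    cases v with
    | nil => rfl
    | cons y ys => simp [dc_insert] at h
  | cons x xs ih =>
    intro v h
    cases v with
    | nil => simp [dc_delete] at h
    | cons y ys =>
      rw [levenshtein_cons_cons, Nat.min_eq_zero_iff, Nat.min_eq_zero_iff] at h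
      rcases h with h1 | h2 | h3
      · simp [dc_delete] at h1
      · simp [dc_insert] at h2
      · rw [dc_substitute, Nat.add_eq_zero] at h3
        obtain ⟨hxy, h0⟩ := h3
        have hxy' : x = y := by by_contra hne; simp [hne] at hxy
        rw [hxy', ih h0]

lemma lev_cons_le (a : Γ) (u v : List Γ) :
    levenshtein C (a::u) (a::v) ≤ levenshtein C u v := by
  rw [levenshtein_cons_cons]
  refine le_trans (le_trans (min_le_right _ _) (min_le_right _ _)) ?_
  simp [dc_substitute]

lemma lev_append_le (A u v : List Γ) :
    levenshtein C (A ++ u) (A ++ v) ≤ levenshtein C u v := by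
  induction A with
  | nil => simp
  | cons a A ih => exact le_trans (lev_cons_le a _ _) ih

lemma lev_insert_le (y : Γ) (u : List Γ) : levenshtein C u (y :: u) ≤ 1 := by
  cases u with
  | nil => simp [dc_insert]
  | cons x xs =>
    rw [levenshtein_cons_cons]
    refine le_trans (le_trans (min_le_right _ _) (min_le_left _ _)) ?_
    rw [dc_insert, lev_self]

lemma lev_delete_le (x : Γ) (u : List Γ) : levenshtein C (x :: u) u ≤ 1 := by
  cases u with
  | nil => simp [dc_delete]
  | cons y ys =>
    rw [levenshtein_cons_cons]
    refine le_trans (min_le_left _ _) ?_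
    rw [dc_delete, lev_self]

lemma lev_subst_le (x y : Γ) (u : List Γ) : levenshtein C (x :: u) (y :: u) ≤ 1 := by
  rw [levenshtein_cons_cons]
  refine le_trans (le_trans (min_le_right _ _) (min_le_right _ _)) ?_
  rw [dc_substitute, lev_self]
  split <;> simp

lemma psi_none_cons (T : List (Option Γ)) : psi (none :: T) = psi T := by
  simp [psi]

lemma psi_some_cons (a : Γ) (T : List (Option Γ)) : psi (some a :: T) = a :: psi T := by
  simp [psi]

lemma psi_phi (B : List Γ) : psi (phi B) = B := by
  induction B with
  | nil => simp [phi, psi]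
  | cons b B ih =>
    have : phi (b :: B) = none :: some b :: phi B := by simp [phi]
    rw [this, psi_none_cons, psi_some_cons, ih]

lemma phi_cons (a : Γ) (A : List Γ) : phi (a :: A) = none :: some a :: phi A := by
  simp [phi]

lemma key1 (A : List Γ) : ∀ (B : List Γ) (c : Option Γ),
    psi ((phi (A ++ B)).set (2 * A.length) c) = A ++ c.toList ++ B := by
  induction A with
  | nil =>
    intro B c
    rw [List.nil_append]
    show psi ((phi B).set 0 c) = c.toList ++ B
    cases B with
    | nil => cases c <;> simp [phi, psi]
    | cons b B =>
      rw [phi_cons, List.set_cons_zero]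
      cases c with
      | none => rw [psi_none_cons, psi_some_cons, psi_phi]; rfl
      | some y => rw [psi_some_cons, psi_some_cons, psi_phi]; rfl
  | cons a A ih =>
    intro B c
    rw [List.cons_append, phi_cons]
    have h2 : 2 * (a :: A).length = 2 * A.length + 1 + 1 := by
      simp [List.length_cons]; ring
    rw [h2, List.set_cons_succ, List.set_cons_succ, psi_none_cons, psi_some_cons, ih]
    rfl

lemma key2 (A : List Γ) : ∀ (B : List Γ) (x : Γ) (c : Option Γ),
    psi ((phi (A ++ x :: B)).set (2 * A.length + 1) c) = A ++ c.toList ++ B := by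
  induction A with
  | nil =>
    intro B x c
    rw [List.nil_append, phi_cons]
    show psi ((List.cons none (some x :: phi B)).set (0 + 1) c) = c.toList ++ B
    rw [List.set_cons_succ, List.set_cons_zero, psi_none_cons]
    cases c with
    | none => rw [psi_none_cons, psi_phi]; rfl
    | some y => rw [psi_some_cons, psi_phi]; rfl
  | cons a A ih =>
    intro B x c
    rw [List.cons_append, phi_cons]
    have h2 : 2 * (a :: A).length + 1 = (2 * A.length + 1) + 1 + 1 := by
      simp [List.length_cons]; ring
    rw [h2, List.set_cons_succ, List.set_cons_succ, psi_none_cons, psi_some_cons, ih]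
    rfl

lemma lev_le_one_cases : ∀ (S : List Γ) (S' : List Γ), levenshtein C S S' ≤ 1 →
    ∃ A B : List Γ, ∃ c : Option Γ,
      (S = A ++ B ∧ S' = A ++ c.toList ++ B) ∨
      (∃ x, S = A ++ x :: B ∧ S' = A ++ c.toList ++ B) := by
  intro S
  induction S with
  | nil =>
    intro S' h
    cases S' with
    | nil => exact ⟨[], [], none, Or.inl ⟨rfl, rfl⟩⟩
    | cons y ys =>
      have hys : ys = [] := by
        cases ys with
        | nil => rfl
        | cons z zs => simp [dc_insert] at h
      subst hys
      exact ⟨[], [], some y, Or.inl ⟨rfl, rfl⟩⟩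
  | cons x xs ih =>
    intro S' h
    cases S' with
    | nil =>
      have hxs : xs = [] := by
        cases xs with
        | nil => rfl
        | cons z zs => simp [dc_delete] at h
      subst hxs
      exact ⟨[], [], none, Or.inr ⟨x, rfl, rfl⟩⟩
    | cons y ys =>
      rw [levenshtein_cons_cons] at h
      rcases min_le_iff.mp h with h1 | h1
      · -- delete branch
        rw [dc_delete] at h1
        have h0 : levenshtein C xs (y :: ys) = 0 := by omega
        have := lev_eq_zero h0
        exact ⟨[], y :: ys, none, Or.inr ⟨x, by simp [this], by simp⟩⟩
      rcases min_le_iff.mp h1 with h2 | h3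
      · -- insert branch
        rw [dc_insert] at h2
        have h0 : levenshtein C (x :: xs) ys = 0 := by omega
        have := lev_eq_zero h0
        exact ⟨[], x :: xs, some y, Or.inl ⟨rfl, by simp [← this]⟩⟩
      · -- substitute branch
        rw [dc_substitute] at h3
        by_cases hxy : x = y
        · subst hxy
          rw [if_pos rfl, zero_add] at h3
          obtain ⟨A, B, c, hc⟩ := ih ys h3
          refine ⟨x :: A, B, c, ?_⟩
          rcases hc with ⟨hS, hS'⟩ | ⟨z, hS, hS'⟩
          · exact Or.inl ⟨by rw [hS]; rfl, by rw [hS']; rfl⟩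
          · exact Or.inr ⟨z, by rw [hS]; rfl, by rw [hS']; rfl⟩
        · simp only [if_neg hxy] at h3
          have h0 : levenshtein C xs ys = 0 := by omega
          have := lev_eq_zero h0
          exact ⟨[], xs, some y, Or.inr ⟨x, by simp, by simp [← this]⟩⟩

end Aux

/-- Generation of `𝒮₁`: the Levenshtein ball of radius 1 around `S` equals the
set of single-replacement edits of the expansion of `S`. -/
theorem levenshtein_ball_one_eq {Γ : Type*} [DecidableEq Γ] [Nontrivial Γ]
    (S : List Γ) (hS : S ≠ []) :
    {S' : List Γ | dlev S S' ≤ 1} =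
      {S' : List Γ | ∃ i < 2 * S.length + 1, ∃ c : Option Γ,
        S' = psi ((phi S).set i c)} := by
  ext S'
  simp only [Set.mem_setOf_eq]
  constructor
  · intro h
    obtain ⟨A, B, c, hc⟩ := lev_le_one_cases S S' h
    rcases hc with ⟨hSeq, hS'⟩ | ⟨x, hSeq, hS'⟩
    · refine ⟨2 * A.length, ?_, c, ?_⟩
      · have : A.length ≤ S.length := by rw [hSeq]; simp
        omega
      · rw [hS', hSeq, key1]
    · refine ⟨2 * A.length + 1, ?_, c, ?_⟩
      · have : A.length < S.length := by rw [hSeq]; simp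
        omega
      · rw [hS', hSeq, key2]
  · rintro ⟨i, hi, c, hS'⟩
    rcases Nat.even_or_odd i with ⟨k, hk⟩ | ⟨k, hk⟩
    · -- i = 2k, replace a `none`
      have hkS : k ≤ S.length := by omega
      have hdecomp : S = S.take k ++ S.drop k := (List.take_append_drop k S).symm
      have hlen : (S.take k).length = k := by simp [hkS]
      have hS'' : S' = S.take k ++ c.toList ++ S.drop k := by
        rw [hS']
        nth_rewrite 1 [hdecomp]
        rw [show i = 2 * (S.take k).length by omega]
        exact key1 _ _ _
      rw [hS'']
      show levenshtein _ S _ ≤ 1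
      nth_rewrite 1 [hdecomp]
      rw [List.append_assoc]
      refine le_trans (lev_append_le _ _ _) ?_
      cases c with
      | none =>
        have he : (Option.toList (none : Option Γ)) ++ S.drop k = S.drop k := rfl
        rw [he, lev_self]; exact Nat.zero_le 1
      | some y => exact lev_insert_le y _
    · -- i = 2k+1, replace `some S[k]`
      have hkS : k < S.length := by omega
      have hdecomp : S = S.take k ++ S[k] :: S.drop (k + 1) := by
        conv_lhs => rw [← List.take_append_drop k S]
        rw [List.drop_eq_getElem_cons hkS]
      have hlen : (S.take k).length = k := by simp [Nat.le_of_lt hkS]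
      have hS'' : S' = S.take k ++ c.toList ++ S.drop (k + 1) := by
        rw [hS']
        nth_rewrite 1 [hdecomp]
        rw [show i = 2 * (S.take k).length + 1 by omega]
        exact key2 _ _ _ _
      rw [hS'']
      show levenshtein _ S _ ≤ 1
      nth_rewrite 1 [hdecomp]
      rw [List.append_assoc]
      refine le_trans (lev_append_le _ _ _) ?_
      cases c with
      | none => exact lev_delete_le _ _
      | some y => exact lev_subst_le _ _ _
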